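/- Let N_0, N_1, N_2, ... be i.i.d. s-dimensional random vectors with zero mean and finite variance, and let B be an s×s matrix with operator norm ‖B‖ < 1. Define X_0 = N_0, X_t = B X_{t−1} + N_t, and Y_t = (I − B)^{−1} N_t. If g(k) > 0 and g(k) → ∞, then (1/g(k)) sum_{t=1}^k Y_t − (1/g(k)) sum_{t=1}^k X_t converges to 0 in probability as k → ∞. -/

import Mathlib

open MeasureTheory ProbabilityTheory Filter

/-- Let `N₀, N₁, ...` be i.i.d. `s`-dimensional random vectors with zero mean
and finite variance, `B` an operator with `‖B‖ < 1`. With `X₀ = N₀`, `X_t = B X_{t-1} + N_t`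
and `Y_t = B Y_t + N_t` (the instantaneous fixed point, i.e. `Y_t = (I−B)⁻¹ N_t`), if
`g k > 0` and `g k → ∞`, then `(1/g k) ∑_{t=1}^k Y_t − (1/g k) ∑_{t=1}^k X_t → 0`
in probability as `k → ∞`. -/
theorem stmt14 {Ω : Type*} [MeasurableSpace Ω] (μ : Measure Ω) [IsProbabilityMeasure μ]
    (s : ℕ) (B : EuclideanSpace ℝ (Fin s) →L[ℝ] EuclideanSpace ℝ (Fin s)) (hB : ‖B‖ < 1)
    (N X Y : ℕ → Ω → EuclideanSpace ℝ (Fin s))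
    (hNmeas : ∀ t, Measurable (N t))
    (hNindep : iIndepFun N μ)
    (hNident : ∀ t, Measure.map (N t) μ = Measure.map (N 0) μ)
    (hNmean : ∀ t, ∫ ω, N t ω ∂μ = 0)
    (hNvar : ∀ t, MemLp (N t) 2 μ)
    (hX0 : ∀ ω, X 0 ω = N 0 ω)
    (hXrec : ∀ t ω, X (t + 1) ω = B (X t ω) + N (t + 1) ω)
    (hYfix : ∀ t ω, Y t ω = B (Y t ω) + N t ω)
    (g : ℕ → ℝ) (hgpos : ∀ k, 0 < g k) (hg : Tendsto g atTop atTop) :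
    TendstoInMeasure μ
      (fun k ω => (g k)⁻¹ • ((∑ t ∈ Finset.Icc 1 k, Y t ω) - ∑ t ∈ Finset.Icc 1 k, X t ω))
      atTop (fun _ => 0) := by
  have hB0 : (0:ℝ) ≤ ‖B‖ := norm_nonneg _
  have h1B : (0:ℝ) < 1 - ‖B‖ := by linarith
  set m : ℝ := ∫ ω, ‖N 0 ω‖ ∂μ with hm
  have hm0 : 0 ≤ m := integral_nonneg fun ω => norm_nonneg _
  have hNint : ∀ t, Integrable (N t) μ := fun t =>
    (hNvar t).integrable (by norm_num)
  have hNnorm : ∀ t, ∫ ω, ‖N t ω‖ ∂μ = m := by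
    intro t
    rw [hm, ← integral_map (hNmeas t).aemeasurable
        (by fun_prop : AEStronglyMeasurable (fun x : EuclideanSpace ℝ (Fin s) => ‖x‖) _),
      hNident t, integral_map (hNmeas 0).aemeasurable (by fun_prop)]
  -- measurability and integrability of X
  have hXmeas : ∀ k, Measurable (X k) := by
    intro k; induction k with
    | zero =>
      have : X 0 = N 0 := funext hX0
      rw [this]; exact hNmeas 0
    | succ k ih =>
      have : X (k+1) = fun ω => B (X k ω) + N (k+1) ω := funext (hXrec k)
      rw [this]; exact (B.continuous.measurable.comp ih).add (hNmeas (k+1))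
  have hXint : ∀ k, Integrable (X k) μ := by
    intro k; induction k with
    | zero =>
      have : X 0 = N 0 := funext hX0
      rw [this]; exact hNint 0
    | succ k ih =>
      have : X (k+1) = fun ω => B (X k ω) + N (k+1) ω := funext (hXrec k)
      rw [this]; exact (B.integrable_comp ih).add (hNint (k+1))
  -- uniform L¹ bound on X
  set M : ℝ := m / (1 - ‖B‖) with hM
  have hMclear : M * (1 - ‖B‖) = m := div_mul_cancel₀ _ h1B.ne'
  have hM0 : 0 ≤ M := div_nonneg hm0 h1B.le
  have hXbound : ∀ k, ∫ ω, ‖X k ω‖ ∂μ ≤ M := by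
    intro k; induction k with
    | zero =>
      have : X 0 = N 0 := funext hX0
      rw [this, hNnorm 0]; nlinarith
    | succ k ih =>
      have h1 : ∫ ω, ‖X (k+1) ω‖ ∂μ ≤ ∫ ω, (‖B‖ * ‖X k ω‖ + ‖N (k+1) ω‖) ∂μ := by
        refine integral_mono (hXint (k+1)).norm
          (((hXint k).norm.const_mul _).add (hNint (k+1)).norm) fun ω => ?_
        simp only [Pi.add_apply]
        rw [hXrec k ω]
        exact (norm_add_le _ _).trans (by
          have := B.le_opNorm (X k ω); linarith)
      rw [integral_add ((hXint k).norm.const_mul _) (hNint (k+1)).norm,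
        integral_const_mul, hNnorm] at h1
      have h2 : ‖B‖ * ∫ ω, ‖X k ω‖ ∂μ ≤ ‖B‖ * M :=
        mul_le_mul_of_nonneg_left ih hB0
      nlinarith
  -- deterministic key identity : (I - B) D_k = B (X_k - X_0)
  have hD : ∀ k ω, ((∑ t ∈ Finset.Icc 1 k, Y t ω) - ∑ t ∈ Finset.Icc 1 k, X t ω)
      - B ((∑ t ∈ Finset.Icc 1 k, Y t ω) - ∑ t ∈ Finset.Icc 1 k, X t ω)
      = B (X k ω) - B (X 0 ω) := by
    intro k ω; induction k with
    | zero => simp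
    | succ k ih =>
      rw [Finset.sum_Icc_succ_top (Nat.le_add_left 1 k),
        Finset.sum_Icc_succ_top (Nat.le_add_left 1 k)]
      have h1 : Y (k+1) ω - B (Y (k+1) ω) = N (k+1) ω :=
        sub_eq_iff_eq_add'.mpr (hYfix (k+1) ω)
      have key : ∀ d e y x : EuclideanSpace ℝ (Fin s),
          (d + y) - (e + x) - B ((d + y) - (e + x)) =
            ((d - e) - B (d - e)) + (y - B y) - (x - B x) := by
        intro d e y x; simp only [map_sub, map_add]; abel
      rw [key, ih, h1, hXrec k ω]
      simp only [map_add]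
      abel
  -- norm bound on the difference
  set C : ℝ := (‖B‖ + 1) / (1 - ‖B‖) with hC
  have hCclear : C * (1 - ‖B‖) = ‖B‖ + 1 := div_mul_cancel₀ _ h1B.ne'
  have hC0 : 0 < C := div_pos (by linarith) h1B
  have hDnorm : ∀ k ω,
      ‖(∑ t ∈ Finset.Icc 1 k, Y t ω) - ∑ t ∈ Finset.Icc 1 k, X t ω‖
        ≤ C * (‖X k ω‖ + ‖X 0 ω‖) := by
    intro k ω
    set D := (∑ t ∈ Finset.Icc 1 k, Y t ω) - ∑ t ∈ Finset.Icc 1 k, X t ω with hDdef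
    have h1 : ‖D - B D‖ ≤ ‖B‖ * (‖X k ω‖ + ‖X 0 ω‖) := by
      rw [hD k ω]
      refine (norm_sub_le _ _).trans ?_
      have := B.le_opNorm (X k ω); have := B.le_opNorm (X 0 ω); linarith [mul_add ‖B‖ ‖X k ω‖ ‖X 0 ω‖]
    have h2 : ‖D‖ - ‖B‖ * ‖D‖ ≤ ‖D - B D‖ := by
      have := norm_sub_norm_le D (B D)
      have := B.le_opNorm D
      linarith
    have hS : 0 ≤ ‖X k ω‖ + ‖X 0 ω‖ := by positivity
    nlinarith [norm_nonneg D]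
  -- Markov / convergence in measure
  rw [tendstoInMeasure_iff_dist]
  intro ε hε
  have hbound : ∀ k, μ {ω | ε ≤ dist ((g k)⁻¹ •
        ((∑ t ∈ Finset.Icc 1 k, Y t ω) - ∑ t ∈ Finset.Icc 1 k, X t ω)) 0}
      ≤ ENNReal.ofReal ((2 * M * C / ε) / g k) := by
    intro k
    set a : ℝ := ε * g k / C with ha
    have ha0 : 0 < a := div_pos (mul_pos hε (hgpos k)) hC0
    set S : Ω → ℝ := fun ω => ‖X k ω‖ + ‖X 0 ω‖ with hSdef
    have hSint : Integrable S μ := (hXint k).norm.add (hXint 0).norm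
    have hSnn : ∀ ω, 0 ≤ S ω := fun ω => by positivity
    have hsub : {ω | ε ≤ dist ((g k)⁻¹ •
          ((∑ t ∈ Finset.Icc 1 k, Y t ω) - ∑ t ∈ Finset.Icc 1 k, X t ω)) 0}
        ⊆ {ω | ENNReal.ofReal a ≤ ENNReal.ofReal (S ω)} := by
      intro ω hω
      simp only [Set.mem_setOf_eq, dist_zero_right, norm_smul, norm_inv,
        Real.norm_eq_abs, abs_of_pos (hgpos k)] at hω
      have h1 : ε * g k ≤ ‖(∑ t ∈ Finset.Icc 1 k, Y t ω) - ∑ t ∈ Finset.Icc 1 k, X t ω‖ := by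
        rw [inv_mul_eq_div, le_div_iff₀ (hgpos k)] at hω
        exact hω
      have h2 : ε * g k ≤ C * S ω := h1.trans (hDnorm k ω)
      have h3 : a ≤ S ω := by
        rw [ha, div_le_iff₀ hC0]; linarith [h2, mul_comm C (S ω)]
      exact Set.mem_setOf_eq ▸ ENNReal.ofReal_le_ofReal h3
    have hmark : ENNReal.ofReal a * μ {ω | ENNReal.ofReal a ≤ ENNReal.ofReal (S ω)}
        ≤ ∫⁻ ω, ENNReal.ofReal (S ω) ∂μ :=
      mul_meas_ge_le_lintegral₀
        (ENNReal.measurable_ofReal.comp_aemeasurable hSint.aemeasurable) _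
    have hlint : ∫⁻ ω, ENNReal.ofReal (S ω) ∂μ = ENNReal.ofReal (∫ ω, S ω ∂μ) :=
      (ofReal_integral_eq_lintegral_ofReal hSint (ae_of_all _ hSnn)).symm
    have hint2M : ∫ ω, S ω ∂μ ≤ 2 * M := by
      rw [hSdef]
      have := integral_add (hXint k).norm (hXint 0).norm
      rw [this]
      linarith [hXbound k, hXbound 0]
    calc μ {ω | ε ≤ dist ((g k)⁻¹ •
          ((∑ t ∈ Finset.Icc 1 k, Y t ω) - ∑ t ∈ Finset.Icc 1 k, X t ω)) 0}
        ≤ μ {ω | ENNReal.ofReal a ≤ ENNReal.ofReal (S ω)} := measure_mono hsub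
      _ ≤ (∫⁻ ω, ENNReal.ofReal (S ω) ∂μ) / ENNReal.ofReal a := by
          rw [ENNReal.le_div_iff_mul_le (Or.inl (by simp [ha0])) (Or.inl ENNReal.ofReal_ne_top),
            mul_comm]
          exact hmark
      _ ≤ ENNReal.ofReal (2 * M) / ENNReal.ofReal a := by
          gcongr
          rw [hlint]
          exact ENNReal.ofReal_le_ofReal hint2M
      _ = ENNReal.ofReal (2 * M / a) := (ENNReal.ofReal_div_of_pos ha0).symm
      _ = ENNReal.ofReal ((2 * M * C / ε) / g k) := by
          congr 1
          rw [ha]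
          field_simp

  have hlim : Tendsto (fun k => ENNReal.ofReal ((2 * M * C / ε) / g k)) atTop (nhds 0) := by
    have : Tendsto (fun k => (2 * M * C / ε) / g k) atTop (nhds 0) :=
      Tendsto.div_atTop tendsto_const_nhds hg
    simpa using ENNReal.tendsto_ofReal this
  exact tendsto_of_tendsto_of_tendsto_of_le_of_le tendsto_const_nhds hlim
    (fun k => zero_le) hbound
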